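/- arXiv:0906.5478 — 2 statements merged into one kernel-verified Lean document; each statement's English description precedes it below -/
import Mathlib

section
/- Let m > 0. There exists a constant C > 0, depending only on m, such that for every h ∈ L²(ℝ; ℂ) the function (k₁, k₂) ↦ h(k₁ + k₂) · ε(k₁)^{-1/2} ε(k₂)^{-1/2} belongs to L²(ℝ²; ℂ) and its L²(ℝ²)-norm is at most C · ‖h‖_{L²(ℝ)}. -/
open MeasureTheory

/-- The one-particle energy `ε(k) = (k² + m²)^{1/2}`. -/
noncomputable def eps (m k : ℝ) : ℝ := Real.sqrt (k ^ 2 + m ^ 2)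

open scoped ENNReal

namespace Stmt2Aux

/-- If `f = f'` a.e. on `ℝ`, then `f (x + y) = f' (x + y)` a.e. on `ℝ²`. -/
lemma ae_comp_add {α : Type*} {f f' : ℝ → α} (hff' : f =ᵐ[volume] f') :
    (fun p : ℝ × ℝ => f (p.1 + p.2)) =ᵐ[(volume : Measure (ℝ × ℝ))]
      (fun p : ℝ × ℝ => f' (p.1 + p.2)) := by
  have hT : MeasurePreserving (fun p : ℝ × ℝ => (p.1 + p.2, p.2))
      ((volume : Measure ℝ).prod volume) ((volume : Measure ℝ).prod volume) :=
    measurePreserving_add_prod _ _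
  have hS : volume {x : ℝ | f x ≠ f' x} = 0 := hff'
  have h0 : ((volume : Measure ℝ).prod volume)
      ({x : ℝ | f x ≠ f' x} ×ˢ (Set.univ : Set ℝ)) = 0 := by
    rw [Measure.prod_prod, hS, zero_mul]
  have hsub : {p : ℝ × ℝ | f (p.1 + p.2) ≠ f' (p.1 + p.2)} ⊆
      (fun p : ℝ × ℝ => (p.1 + p.2, p.2)) ⁻¹'
        ({x : ℝ | f x ≠ f' x} ×ˢ (Set.univ : Set ℝ)) := by
    intro p hp
    exact ⟨hp, trivial⟩
  have hnull : (volume : Measure (ℝ × ℝ))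
      {p : ℝ × ℝ | f (p.1 + p.2) ≠ f' (p.1 + p.2)} = 0 := by
    rw [Measure.volume_eq_prod]
    exact measure_mono_null hsub (hT.quasiMeasurePreserving.preimage_null h0)
  rw [Filter.EventuallyEq, ae_iff]
  exact hnull

lemma lint_shear_fst (φ w : ℝ → ℝ≥0∞) (hφ : Measurable φ) (hw : Measurable w) :
    ∫⁻ p : ℝ × ℝ, φ (p.1 + p.2) * w p.1 ∂(volume : Measure (ℝ × ℝ))
      = (∫⁻ x, w x) * ∫⁻ x, φ x := by
  have hmeas : Measurable fun p : ℝ × ℝ => φ (p.1 + p.2) * w p.1 :=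
    (hφ.comp (measurable_fst.add measurable_snd)).mul (hw.comp measurable_fst)
  rw [Measure.volume_eq_prod, lintegral_prod _ hmeas.aemeasurable]
  have hinner : ∀ x : ℝ, (∫⁻ y, φ (x + y) * w x ∂(volume : Measure ℝ))
      = w x * ∫⁻ z, φ z := by
    intro x
    calc ∫⁻ y, φ (x + y) * w x ∂(volume : Measure ℝ)
        = ∫⁻ y, w x * φ (x + y) ∂(volume : Measure ℝ) := by
          simp_rw [mul_comm]
      _ = w x * ∫⁻ y, φ (x + y) ∂(volume : Measure ℝ) :=
          lintegral_const_mul _ (hφ.comp (measurable_const.add measurable_id))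
      _ = w x * ∫⁻ z, φ z := by rw [lintegral_add_left_eq_self φ x]
  simp_rw [hinner]
  exact lintegral_mul_const _ hw

lemma lint_shear_snd (φ w : ℝ → ℝ≥0∞) (hφ : Measurable φ) (hw : Measurable w) :
    ∫⁻ p : ℝ × ℝ, φ (p.1 + p.2) * w p.2 ∂(volume : Measure (ℝ × ℝ))
      = (∫⁻ x, w x) * ∫⁻ x, φ x := by
  have hmeas : Measurable fun p : ℝ × ℝ => φ (p.1 + p.2) * w p.2 :=
    (hφ.comp (measurable_fst.add measurable_snd)).mul (hw.comp measurable_snd)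
  rw [Measure.volume_eq_prod, lintegral_prod_symm _ hmeas.aemeasurable]
  have hinner : ∀ y : ℝ, (∫⁻ x, φ (x + y) * w y ∂(volume : Measure ℝ))
      = w y * ∫⁻ z, φ z := by
    intro y
    calc ∫⁻ x, φ (x + y) * w y ∂(volume : Measure ℝ)
        = (∫⁻ x, φ (x + y) ∂(volume : Measure ℝ)) * w y :=
          lintegral_mul_const _ (hφ.comp (measurable_id.add_const y))
      _ = (∫⁻ z, φ z) * w y := by rw [lintegral_add_right_eq_self φ y]
      _ = w y * ∫⁻ z, φ z := mul_comm _ _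
  simp_rw [hinner]
  exact lintegral_mul_const _ hw

lemma integrable_inv_sq_add (m : ℝ) (hm : 0 < m) :
    Integrable (fun x : ℝ => (x ^ 2 + m ^ 2)⁻¹) := by
  have hmin : 0 < min 1 (m ^ 2) := lt_min one_pos (by positivity)
  have hbound : ∀ x : ℝ, (x ^ 2 + m ^ 2)⁻¹ ≤ (min 1 (m ^ 2))⁻¹ * (1 + x ^ 2)⁻¹ := by
    intro x
    rw [← mul_inv]
    refine inv_anti₀ (by nlinarith [sq_nonneg x]) ?_
    have h1 : min 1 (m ^ 2) ≤ 1 := min_le_left _ _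
    have h2 : min 1 (m ^ 2) ≤ m ^ 2 := min_le_right _ _
    nlinarith [sq_nonneg x]
  refine (integrable_inv_one_add_sq.const_mul ((min 1 (m ^ 2))⁻¹)).mono' ?_ ?_
  · exact (((continuous_pow 2).add continuous_const).inv₀
      (fun x => (by positivity : x ^ 2 + m ^ 2 ≠ 0))).aestronglyMeasurable
  · filter_upwards with x
    rw [Real.norm_eq_abs, abs_of_nonneg (by positivity)]
    exact hbound x

lemma key_real (m : ℝ) (hm : 0 < m) (x y : ℝ) :
    (eps m x ^ (-(1 : ℝ)/2) * eps m y ^ (-(1 : ℝ)/2)) ^ 2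
      ≤ (x ^ 2 + m ^ 2)⁻¹ + (y ^ 2 + m ^ 2)⁻¹ := by
  have hx : (0 : ℝ) < x ^ 2 + m ^ 2 := by positivity
  have hy : (0 : ℝ) < y ^ 2 + m ^ 2 := by positivity
  have hsx : 0 < eps m x := Real.sqrt_pos.2 hx
  have hsy : 0 < eps m y := Real.sqrt_pos.2 hy
  have hsqx : eps m x ^ 2 = x ^ 2 + m ^ 2 := Real.sq_sqrt hx.le
  have hsqy : eps m y ^ 2 = y ^ 2 + m ^ 2 := Real.sq_sqrt hy.le
  have hax : (eps m x ^ (-(1 : ℝ)/2)) ^ 2 = (eps m x)⁻¹ := by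
    rw [← Real.rpow_natCast (eps m x ^ (-(1 : ℝ)/2)) 2, ← Real.rpow_mul hsx.le]
    norm_num
    exact Real.rpow_neg_one _
  have hay : (eps m y ^ (-(1 : ℝ)/2)) ^ 2 = (eps m y)⁻¹ := by
    rw [← Real.rpow_natCast (eps m y ^ (-(1 : ℝ)/2)) 2, ← Real.rpow_mul hsy.le]
    norm_num
    exact Real.rpow_neg_one _
  rw [mul_pow, hax, hay, ← hsqx, ← hsqy]
  have h1 : (eps m x ^ 2)⁻¹ = ((eps m x)⁻¹) ^ 2 := by rw [inv_pow]
  have h2 : (eps m y ^ 2)⁻¹ = ((eps m y)⁻¹) ^ 2 := by rw [inv_pow]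
  rw [h1, h2]
  nlinarith [sq_nonneg ((eps m x)⁻¹ - (eps m y)⁻¹), sq_nonneg ((eps m x)⁻¹ + (eps m y)⁻¹)]

lemma enorm_sq (a : ℂ) :
    (‖a‖₊ : ℝ≥0∞) ^ (2 : ℝ) = ENNReal.ofReal (‖a‖ ^ 2) := by
  rw [← enorm_eq_nnnorm, ← ofReal_norm, ENNReal.ofReal_rpow_of_nonneg (norm_nonneg a) (by norm_num),
    Real.rpow_two]

end Stmt2Aux

open Stmt2Aux in
/-- Quantitative core of the bound `‖R‖_{L²(ℝ²)} ≤ C ‖V′‖_{L²(ℝ)}` in Lemma 2.1 of the paper: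
for `m > 0` there is `C > 0` (depending only on `m`) such that for every `h ∈ L²(ℝ; ℂ)` the
function `(k₁,k₂) ↦ h(k₁+k₂) ε(k₁)^{-1/2} ε(k₂)^{-1/2}` is in `L²(ℝ²; ℂ)` with norm at most
`C‖h‖_{L²}`. -/
theorem stmt_2 (m : ℝ) (hm : 0 < m) :
    ∃ C : ℝ, 0 < C ∧ ∀ h : ℝ → ℂ, MemLp h 2 (volume : Measure ℝ) →
      MemLp (fun p : ℝ × ℝ =>
          h (p.1 + p.2) * ((eps m p.1 ^ (-(1 : ℝ)/2) * eps m p.2 ^ (-(1 : ℝ)/2) : ℝ) : ℂ))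
        2 (volume : Measure (ℝ × ℝ)) ∧
      eLpNorm (fun p : ℝ × ℝ =>
          h (p.1 + p.2) * ((eps m p.1 ^ (-(1 : ℝ)/2) * eps m p.2 ^ (-(1 : ℝ)/2) : ℝ) : ℂ))
        2 (volume : Measure (ℝ × ℝ))
        ≤ ENNReal.ofReal C * eLpNorm h 2 (volume : Measure ℝ) := by
  classical
  -- the weight `w x = (x² + m²)⁻¹` and its (finite) integral `A`
  set w : ℝ → ℝ≥0∞ := fun x => ENNReal.ofReal ((x ^ 2 + m ^ 2)⁻¹) with hw_def
  have hw : Measurable w := by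
    apply Measurable.ennreal_ofReal
    exact ((measurable_id.pow_const 2).add_const _).inv
  set A : ℝ≥0∞ := ∫⁻ x, w x with hA_def
  have hA_lt : A < ⊤ := (integrable_inv_sq_add m hm).lintegral_lt_top
  set C : ℝ := Real.sqrt (2 * A.toReal) + 1 with hC_def
  have hC_pos : 0 < C := by positivity
  -- the key comparison `(2A)^{1/2} ≤ ofReal C`
  have h2A_ne : (2 : ℝ≥0∞) * A ≠ ⊤ := ENNReal.mul_ne_top (by norm_num) hA_lt.ne
  have hsqrtA : ((2 : ℝ≥0∞) * A) ^ ((1 : ℝ)/2) ≤ ENNReal.ofReal C := by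
    have h2A : (2 : ℝ≥0∞) * A = ENNReal.ofReal (2 * A.toReal) := by
      rw [ENNReal.ofReal_mul (by norm_num), ENNReal.ofReal_ofNat,
        ENNReal.ofReal_toReal hA_lt.ne]
    rw [h2A, ENNReal.ofReal_rpow_of_nonneg (by positivity) (by norm_num)]
    refine ENNReal.ofReal_le_ofReal ?_
    rw [← Real.sqrt_eq_rpow]
    simp [hC_def]
  refine ⟨C, hC_pos, ?_⟩
  intro h hh
  -- measurable representative of `h`
  set h' : ℝ → ℂ := hh.1.mk h with hh'_def
  have hsm' : StronglyMeasurable h' := hh.1.stronglyMeasurable_mk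
  have hhh' : h =ᵐ[volume] h' := hh.1.ae_eq_mk
  set F := fun p : ℝ × ℝ =>
    h (p.1 + p.2) * ((eps m p.1 ^ (-(1 : ℝ)/2) * eps m p.2 ^ (-(1 : ℝ)/2) : ℝ) : ℂ) with hF_def
  set F' := fun p : ℝ × ℝ =>
    h' (p.1 + p.2) * ((eps m p.1 ^ (-(1 : ℝ)/2) * eps m p.2 ^ (-(1 : ℝ)/2) : ℝ) : ℂ) with hF'_def
  have hFF' : F =ᵐ[(volume : Measure (ℝ × ℝ))] F' := by
    filter_upwards [ae_comp_add hhh'] with p hp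
    simp only [hF_def, hF'_def, hp]
  -- measurability
  have heps_m : Measurable fun k : ℝ => eps m k ^ (-(1 : ℝ)/2) := by
    have hc : Continuous fun k : ℝ => eps m k :=
      ((continuous_pow 2).add continuous_const).sqrt
    exact (hc.rpow_const (fun k => Or.inl
      (ne_of_gt (Real.sqrt_pos.2 (by positivity))))).measurable
  have hfac : Measurable fun p : ℝ × ℝ =>
      ((eps m p.1 ^ (-(1 : ℝ)/2) * eps m p.2 ^ (-(1 : ℝ)/2) : ℝ) : ℂ) :=
    Complex.measurable_ofReal.comp
      ((heps_m.comp measurable_fst).mul (heps_m.comp measurable_snd))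
  have hF'sm : AEStronglyMeasurable F' (volume : Measure (ℝ × ℝ)) := by
    refine AEStronglyMeasurable.mul ?_ hfac.aestronglyMeasurable
    exact (hsm'.comp_measurable (measurable_fst.add measurable_snd)).aestronglyMeasurable
  have hFsm : AEStronglyMeasurable F (volume : Measure (ℝ × ℝ)) :=
    hF'sm.congr hFF'.symm
  -- the squared-norm integrand of `h'`
  set Φ : ℝ → ℝ≥0∞ := fun x => ENNReal.ofReal (‖h' x‖ ^ 2) with hΦ_def
  have hΦ : Measurable Φ := ((hsm'.measurable.norm).pow_const 2).ennreal_ofReal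
  set N : ℝ≥0∞ := ∫⁻ x, Φ x with hN_def
  -- `eLpNorm h' 2 = N^{1/2}`
  have h_eLp_h' : eLpNorm h' 2 (volume : Measure ℝ) = N ^ ((1 : ℝ)/2) := by
    rw [eLpNorm_eq_lintegral_rpow_enorm_toReal (by norm_num) (by norm_num)]
    simp only [ENNReal.toReal_ofNat]
    congr 1
    exact lintegral_congr fun x => enorm_sq (h' x)
  -- pointwise bound on the squared norm of `F'`
  have hpt : ∀ p : ℝ × ℝ, (‖F' p‖₊ : ℝ≥0∞) ^ (2 : ℝ)
      ≤ Φ (p.1 + p.2) * (w p.1 + w p.2) := by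
    intro p
    rw [enorm_sq]
    have hnorm : ‖F' p‖ ^ 2 = ‖h' (p.1 + p.2)‖ ^ 2 *
        (eps m p.1 ^ (-(1 : ℝ)/2) * eps m p.2 ^ (-(1 : ℝ)/2)) ^ 2 := by
      rw [hF'_def]
      simp only [norm_mul, Complex.norm_real, mul_pow, Real.norm_eq_abs, sq_abs]
    rw [hnorm]
    calc ENNReal.ofReal (‖h' (p.1 + p.2)‖ ^ 2 *
            (eps m p.1 ^ (-(1 : ℝ)/2) * eps m p.2 ^ (-(1 : ℝ)/2)) ^ 2)
        ≤ ENNReal.ofReal (‖h' (p.1 + p.2)‖ ^ 2 *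
            ((p.1 ^ 2 + m ^ 2)⁻¹ + (p.2 ^ 2 + m ^ 2)⁻¹)) := by
          refine ENNReal.ofReal_le_ofReal ?_
          exact mul_le_mul_of_nonneg_left (key_real m hm p.1 p.2) (by positivity)
      _ = Φ (p.1 + p.2) * (w p.1 + w p.2) := by
          rw [ENNReal.ofReal_mul (by positivity), hΦ_def, hw_def,
            ENNReal.ofReal_add (by positivity) (by positivity)]
  -- integrate the pointwise bound
  have hmain : (∫⁻ p : ℝ × ℝ, (‖F' p‖₊ : ℝ≥0∞) ^ (2 : ℝ)
      ∂(volume : Measure (ℝ × ℝ))) ≤ 2 * A * N := by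
    calc (∫⁻ p : ℝ × ℝ, (‖F' p‖₊ : ℝ≥0∞) ^ (2 : ℝ) ∂(volume : Measure (ℝ × ℝ)))
        ≤ ∫⁻ p : ℝ × ℝ, Φ (p.1 + p.2) * (w p.1 + w p.2)
            ∂(volume : Measure (ℝ × ℝ)) := lintegral_mono hpt
      _ = (∫⁻ p : ℝ × ℝ, Φ (p.1 + p.2) * w p.1 ∂(volume : Measure (ℝ × ℝ)))
            + ∫⁻ p : ℝ × ℝ, Φ (p.1 + p.2) * w p.2 ∂(volume : Measure (ℝ × ℝ)) := by
          simp_rw [mul_add]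
          exact lintegral_add_left
            ((hΦ.comp (measurable_fst.add measurable_snd)).mul (hw.comp measurable_fst)) _
      _ = A * N + A * N := by
          rw [lint_shear_fst Φ w hΦ hw, lint_shear_snd Φ w hΦ hw]
      _ = 2 * A * N := by ring
  -- `eLpNorm F' ≤ (2A)^{1/2} N^{1/2}`
  have h_eLp_F' : eLpNorm F' 2 (volume : Measure (ℝ × ℝ))
      ≤ ((2 : ℝ≥0∞) * A) ^ ((1 : ℝ)/2) * N ^ ((1 : ℝ)/2) := by
    rw [eLpNorm_eq_lintegral_rpow_enorm_toReal (by norm_num) (by norm_num)]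
    simp only [ENNReal.toReal_ofNat]
    calc (∫⁻ p : ℝ × ℝ, (‖F' p‖₊ : ℝ≥0∞) ^ (2 : ℝ)
            ∂(volume : Measure (ℝ × ℝ))) ^ ((1 : ℝ)/2)
        ≤ ((2 : ℝ≥0∞) * A * N) ^ ((1 : ℝ)/2) :=
          ENNReal.rpow_le_rpow hmain (by norm_num)
      _ = ((2 : ℝ≥0∞) * A) ^ ((1 : ℝ)/2) * N ^ ((1 : ℝ)/2) :=
          ENNReal.mul_rpow_of_nonneg _ _ (by norm_num)
  have hfinal : eLpNorm F 2 (volume : Measure (ℝ × ℝ))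
      ≤ ENNReal.ofReal C * eLpNorm h 2 (volume : Measure ℝ) := by
    rw [eLpNorm_congr_ae hFF', eLpNorm_congr_ae hhh', h_eLp_h']
    exact le_trans h_eLp_F' (mul_le_mul_left hsqrtA _)
  refine ⟨⟨hFsm, ?_⟩, hfinal⟩
  calc eLpNorm F 2 (volume : Measure (ℝ × ℝ))
      ≤ ENNReal.ofReal C * eLpNorm h 2 (volume : Measure ℝ) := hfinal
    _ < ⊤ := ENNReal.mul_lt_top ENNReal.ofReal_lt_top hh.2
end

section
/- Let m > 0, 0 < δ < 1, and let f : ℝ → ℂ be measurable with ∫_ℝ ε(k)^{1−δ} |f(k)|² dk < ∞. Then ∫_{ℝ²} ε(k)^{1−δ} ε(k′)^{-2} |f(k′ − k)|² dk dk′ < ∞. -/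
open MeasureTheory ENNReal

lemma m_le_eps (m : ℝ) (hm : 0 ≤ m) (k : ℝ) : m ≤ eps m k := by
  have := Real.sqrt_le_sqrt (show m^2 ≤ k^2 + m^2 by nlinarith)
  rwa [Real.sqrt_sq hm] at this

lemma abs_le_eps (m k : ℝ) : |k| ≤ eps m k := by
  have := Real.sqrt_le_sqrt (show k^2 ≤ k^2 + m^2 by nlinarith)
  rwa [Real.sqrt_sq_eq_abs] at this

lemma eps_pos (m : ℝ) (hm : 0 < m) (k : ℝ) : 0 < eps m k :=
  lt_of_lt_of_le hm (m_le_eps m hm.le k)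

lemma eps_triangle (m a b : ℝ) (hm : 0 < m) : eps m (b - a) ≤ eps m a + eps m b := by
  have h1 : |b| ≤ eps m b := abs_le_eps m b
  have h2 : |a| ≤ eps m a := abs_le_eps m a
  have hb0 : (0:ℝ) ≤ eps m b := (eps_pos m hm b).le
  have hsq : eps m b ^ 2 = b^2 + m^2 := Real.sq_sqrt (by positivity)
  have key : eps m (b - a) ≤ eps m b + |a| := by
    rw [show eps m b + |a| = Real.sqrt ((eps m b + |a|)^2) by
      rw [Real.sqrt_sq (by positivity)]]
    apply Real.sqrt_le_sqrt
    have hab : -(a*b) ≤ |a| * |b| := by rw [← abs_mul]; exact neg_le_abs _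
    nlinarith [abs_nonneg a, abs_nonneg b, sq_abs a, sq_abs b,
      mul_le_mul_of_nonneg_left h1 (abs_nonneg a)]
  linarith

lemma eps_measurable (m : ℝ) : Measurable (eps m) := by
  unfold eps
  exact ((measurable_id.pow_const 2).add_const (m^2)).sqrt

/-- Convergence of the integral `I₂` in the proof of Lemma 4.1 of the paper: for `m > 0`,
`0 < δ < 1` and measurable `f : ℝ → ℂ` with `∫ ε(k)^{1−δ}|f(k)|² dk < ∞`, one has
`∫∫ ε(k)^{1−δ} ε(k′)^{-2} |f(k′−k)|² dk dk′ < ∞`. -/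
theorem stmt_8 (m δ : ℝ) (hm : 0 < m) (hδ0 : 0 < δ) (hδ1 : δ < 1)
    (f : ℝ → ℂ) (hf : Measurable f)
    (hfin : ∫⁻ k : ℝ, ENNReal.ofReal (eps m k ^ (1 - δ) * ‖f k‖ ^ 2) < ⊤) :
    ∫⁻ p : ℝ × ℝ,
        ENNReal.ofReal (eps m p.1 ^ (1 - δ) * eps m p.2 ^ (-(2 : ℝ)) * ‖f (p.2 - p.1)‖ ^ 2)
      < ⊤ := by
  set F : ℝ → ℝ≥0∞ := fun u => ENNReal.ofReal (eps m u ^ (1 - δ) * ‖f u‖ ^ 2) with hFdef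
  set G : ℝ → ℝ≥0∞ := fun y => ENNReal.ofReal (eps m y ^ (-(1 + δ))) with hGdef
  set C : ℝ≥0∞ := ENNReal.ofReal ((2 / m) ^ (1 - δ)) with hCdef
  have heps := eps_measurable m
  have hrpow : ∀ c : ℝ, Measurable fun k => eps m k ^ c := by
    intro c
    have hEq : (fun k => eps m k ^ c) = fun k => Real.exp (Real.log (eps m k) * c) := by
      funext k; rw [Real.rpow_def_of_pos (eps_pos m hm k)]
    rw [hEq]; exact ((heps.log).mul_const c).exp
  have hF : Measurable F := ((hrpow (1 - δ)).mul (hf.norm.pow_const 2)).ennreal_ofReal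
  have hG : Measurable G := (hrpow (-(1 + δ))).ennreal_ofReal
  -- Peetre-type bound
  have hpee : ∀ p : ℝ × ℝ, eps m p.1 ≤ 2 / m * (eps m (p.2 - p.1) * eps m p.2) := by
    intro p
    have h := eps_triangle m (p.2 - p.1) p.2 hm
    rw [show p.2 - (p.2 - p.1) = p.1 by ring] at h
    have ha := m_le_eps m hm.le (p.2 - p.1)
    have hb := m_le_eps m hm.le p.2
    rw [div_mul_eq_mul_div, le_div_iff₀ hm]
    nlinarith [eps_pos m hm (p.2 - p.1), eps_pos m hm p.2]
  -- pointwise domination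
  have key : ∀ p : ℝ × ℝ,
      ENNReal.ofReal (eps m p.1 ^ (1 - δ) * eps m p.2 ^ (-(2 : ℝ)) * ‖f (p.2 - p.1)‖ ^ 2)
        ≤ C * (G p.2 * F (p.2 - p.1)) := by
    intro p
    have ha : (0:ℝ) < eps m (p.2 - p.1) := eps_pos m hm _
    have hb : (0:ℝ) < eps m p.2 := eps_pos m hm _
    have h1δ : (0:ℝ) ≤ 1 - δ := by linarith
    have h1 : eps m p.1 ^ (1 - δ)
        ≤ (2 / m) ^ (1 - δ) * (eps m (p.2 - p.1) ^ (1 - δ) * eps m p.2 ^ (1 - δ)) := by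
      calc eps m p.1 ^ (1 - δ)
          ≤ (2 / m * (eps m (p.2 - p.1) * eps m p.2)) ^ (1 - δ) :=
            Real.rpow_le_rpow (eps_pos m hm _).le (hpee p) h1δ
        _ = (2 / m) ^ (1 - δ) * (eps m (p.2 - p.1) ^ (1 - δ) * eps m p.2 ^ (1 - δ)) := by
            rw [Real.mul_rpow (by positivity) (by positivity),
              Real.mul_rpow ha.le hb.le]
    have h2 : eps m p.2 ^ (1 - δ) * eps m p.2 ^ (-(2:ℝ)) = eps m p.2 ^ (-(1 + δ)) := by
      rw [← Real.rpow_add hb]; congr 1; ring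
    have hreal : eps m p.1 ^ (1 - δ) * eps m p.2 ^ (-(2 : ℝ)) * ‖f (p.2 - p.1)‖ ^ 2
        ≤ (2 / m) ^ (1 - δ) * (eps m p.2 ^ (-(1 + δ)) *
            (eps m (p.2 - p.1) ^ (1 - δ) * ‖f (p.2 - p.1)‖ ^ 2)) := by
      have hb2 : (0:ℝ) ≤ eps m p.2 ^ (-(2:ℝ)) := by positivity
      have hn : (0:ℝ) ≤ ‖f (p.2 - p.1)‖ ^ 2 := by positivity
      calc eps m p.1 ^ (1 - δ) * eps m p.2 ^ (-(2 : ℝ)) * ‖f (p.2 - p.1)‖ ^ 2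
          ≤ (2 / m) ^ (1 - δ) * (eps m (p.2 - p.1) ^ (1 - δ) * eps m p.2 ^ (1 - δ))
              * eps m p.2 ^ (-(2:ℝ)) * ‖f (p.2 - p.1)‖ ^ 2 := by
            apply mul_le_mul_of_nonneg_right _ hn
            exact mul_le_mul_of_nonneg_right (by exact h1) hb2
        _ = (2 / m) ^ (1 - δ) * ((eps m p.2 ^ (1 - δ) * eps m p.2 ^ (-(2:ℝ))) *
              (eps m (p.2 - p.1) ^ (1 - δ) * ‖f (p.2 - p.1)‖ ^ 2)) := by ring
        _ = _ := by rw [h2]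
    calc ENNReal.ofReal (eps m p.1 ^ (1 - δ) * eps m p.2 ^ (-(2 : ℝ)) * ‖f (p.2 - p.1)‖ ^ 2)
        ≤ ENNReal.ofReal ((2 / m) ^ (1 - δ) * (eps m p.2 ^ (-(1 + δ)) *
            (eps m (p.2 - p.1) ^ (1 - δ) * ‖f (p.2 - p.1)‖ ^ 2))) :=
          ENNReal.ofReal_le_ofReal hreal
      _ = C * (G p.2 * F (p.2 - p.1)) := by
          rw [ENNReal.ofReal_mul (by positivity), ENNReal.ofReal_mul (by positivity)]
  -- finiteness of the integral of G
  set c : ℝ := min m 1 / 2 with hc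
  have hc0 : 0 < c := by
    have : 0 < min m 1 := lt_min hm one_pos
    rw [hc]; linarith
  have hGfin : ∫⁻ y : ℝ, G y < ⊤ := by
    have hr : (Module.finrank ℝ ℝ : ℝ) < 1 + δ := by
      rw [Module.finrank_self]; push_cast; linarith
    have hint : Integrable (fun y : ℝ => c ^ (-(1 + δ)) * (1 + ‖y‖) ^ (-(1 + δ))) :=
      (integrable_one_add_norm hr).const_mul _
    refine lt_of_le_of_lt (lintegral_mono fun y => ?_) hint.lintegral_lt_top
    apply ENNReal.ofReal_le_ofReal
    have h1 : c * (1 + |y|) ≤ eps m y := by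
      have hy1 := m_le_eps m hm.le y
      have hy2 := abs_le_eps m y
      have hmin1 : min m 1 ≤ m := min_le_left _ _
      have hmin2 : min m 1 ≤ 1 := min_le_right _ _
      have hy0 := abs_nonneg y
      rw [hc]; nlinarith
    have h2 : eps m y ^ (-(1 + δ)) ≤ (c * (1 + |y|)) ^ (-(1 + δ)) :=
      Real.rpow_le_rpow_of_nonpos (by positivity) h1 (by linarith)
    calc eps m y ^ (-(1 + δ)) ≤ (c * (1 + |y|)) ^ (-(1 + δ)) := h2
      _ = c ^ (-(1 + δ)) * (1 + ‖y‖) ^ (-(1 + δ)) := by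
          rw [Real.mul_rpow hc0.le (by positivity), Real.norm_eq_abs]
  -- Tonelli computation
  have hmeas : Measurable fun p : ℝ × ℝ => G p.2 * F (p.2 - p.1) :=
    (hG.comp measurable_snd).mul (hF.comp (measurable_snd.sub measurable_fst))
  have hIF : (∫⁻ u : ℝ, F u) ≠ ⊤ := hfin.ne
  have htonelli : ∫⁻ p : ℝ × ℝ, G p.2 * F (p.2 - p.1)
      = (∫⁻ y : ℝ, G y) * ∫⁻ u : ℝ, F u := by
    rw [MeasureTheory.Measure.volume_eq_prod, lintegral_prod_symm' _ hmeas]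
    have hinner : ∀ y : ℝ, ∫⁻ x : ℝ, G y * F (y - x) = G y * ∫⁻ u : ℝ, F u := by
      intro y
      rw [lintegral_const_mul (G y) (show Measurable fun x : ℝ => F (y - x) from hF.comp (measurable_const.sub measurable_id))]
      congr 1
      exact (MeasureTheory.Measure.measurePreserving_sub_left (volume : Measure ℝ) y).lintegral_comp hF
    simp only [hinner]
    rw [lintegral_mul_const' _ _ hIF]
  calc ∫⁻ p : ℝ × ℝ,
        ENNReal.ofReal (eps m p.1 ^ (1 - δ) * eps m p.2 ^ (-(2 : ℝ)) * ‖f (p.2 - p.1)‖ ^ 2)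
      ≤ ∫⁻ p : ℝ × ℝ, C * (G p.2 * F (p.2 - p.1)) := lintegral_mono key
    _ = C * ∫⁻ p : ℝ × ℝ, G p.2 * F (p.2 - p.1) :=
        lintegral_const_mul' _ _ ENNReal.ofReal_ne_top
    _ = C * ((∫⁻ y : ℝ, G y) * ∫⁻ u : ℝ, F u) := by rw [htonelli]
    _ < ⊤ := by
        exact ENNReal.mul_lt_top ENNReal.ofReal_lt_top
          (ENNReal.mul_lt_top hGfin hIF.lt_top)
end
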